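/- There exists a constant c₂ > 0 such that for all integers t ≥ 2, n with 1 ≤ n ≤ t−1, and integers k, j satisfying t/4 ≤ k ≤ 3t/4, n/4 ≤ j ≤ 3n/4, and (t−n)/4 ≤ k−j ≤ 3(t−n)/4, one has C(n,j)·C(t−n, k−j)/C(t,k) ≤ c₂/√(min(n, t−n)), where C(a,b) denotes the binomial coefficient. -/

import Mathlib

open Real Stirling Filter Topology Nat

noncomputable def S1 : ℝ := Real.exp 1 / Real.sqrt 2

lemma S1_pos : 0 < S1 := by unfold S1; positivity

lemma stirling_lower {n : ℕ} (hn : 1 ≤ n) : Real.sqrt π ≤ stirlingSeq n := by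
  obtain ⟨m, rfl⟩ := Nat.exists_eq_add_of_le hn
  have htend : Tendsto (stirlingSeq ∘ Nat.succ) atTop (𝓝 (Real.sqrt π)) :=
    tendsto_stirlingSeq_sqrt_pi.comp (tendsto_add_atTop_nat 1)
  have := stirlingSeq'_antitone.le_of_tendsto htend m
  simpa [Nat.add_comm, Nat.succ_eq_add_one] using this

lemma stirling_upper {n : ℕ} (hn : 1 ≤ n) : stirlingSeq n ≤ S1 := by
  obtain ⟨m, rfl⟩ := Nat.exists_eq_add_of_le hn
  have := stirlingSeq'_antitone (Nat.zero_le m)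
  simpa [Nat.add_comm, Nat.succ_eq_add_one, stirlingSeq_one, S1] using this

noncomputable def g (n : ℕ) : ℝ := Real.sqrt (2 * n) * ((n : ℝ) / Real.exp 1) ^ n

lemma g_pos {n : ℕ} (hn : 1 ≤ n) : 0 < g n := by
  have : (0:ℝ) < n := by exact_mod_cast hn
  unfold g; positivity

lemma fact_lower {n : ℕ} (hn : 1 ≤ n) : Real.sqrt π * g n ≤ (n.factorial : ℝ) := by
  have h := stirling_lower hn
  have hg := g_pos hn
  have : stirlingSeq n = (n.factorial : ℝ) / g n := rfl
  rw [this, le_div_iff₀ hg] at h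
  exact h

lemma fact_upper {n : ℕ} (hn : 1 ≤ n) : (n.factorial : ℝ) ≤ S1 * g n := by
  have h := stirling_upper hn
  have hg := g_pos hn
  have : stirlingSeq n = (n.factorial : ℝ) / g n := rfl
  rw [this, div_le_iff₀ hg] at h
  exact h

noncomputable def V (a b : ℕ) : ℝ := ((a : ℝ) + b) ^ (a + b) / ((a : ℝ) ^ a * (b : ℝ) ^ b)

lemma V_pos {a b : ℕ} (ha : 1 ≤ a) (hb : 1 ≤ b) : 0 < V a b := by
  have ha' : (0:ℝ) < a := by exact_mod_cast ha
  have hb' : (0:ℝ) < b := by exact_mod_cast hb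
  unfold V; positivity

lemma V_eq {a b : ℕ} (ha : 1 ≤ a) (hb : 1 ≤ b) :
    V a b = Real.exp (((a : ℝ) + b) * Real.binEntropy ((a : ℝ) / ((a : ℝ) + b))) := by
  have ha' : (0:ℝ) < a := by exact_mod_cast ha
  have hb' : (0:ℝ) < b := by exact_mod_cast hb
  have hs : (0:ℝ) < (a : ℝ) + b := by linarith
  have h1 : (1 : ℝ) - (a : ℝ) / ((a : ℝ) + b) = (b : ℝ) / ((a : ℝ) + b) := by
    field_simp
    ring
  rw [Real.binEntropy, h1]
  have hinv1 : ((a : ℝ) / ((a : ℝ) + b))⁻¹ = ((a : ℝ) + b) / a := by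
    rw [inv_div]
  have hinv2 : ((b : ℝ) / ((a : ℝ) + b))⁻¹ = ((a : ℝ) + b) / b := by
    rw [inv_div]
  rw [hinv1, hinv2]
  have key : ((a : ℝ) + b) * ((a : ℝ) / ((a : ℝ) + b) * Real.log (((a : ℝ) + b) / a)
      + (b : ℝ) / ((a : ℝ) + b) * Real.log (((a : ℝ) + b) / b))
      = ((a : ℝ) + b) * Real.log ((a : ℝ) + b) - (a : ℝ) * Real.log a
        - (b : ℝ) * Real.log b := by
    rw [Real.log_div (by positivity) (by positivity), Real.log_div (by positivity) (by positivity)]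
    field_simp
    ring
  rw [key, Real.exp_sub, Real.exp_sub]
  have e1 : Real.exp (((a:ℝ) + b) * Real.log ((a:ℝ) + b)) = ((a:ℝ) + b) ^ (a + b) := by
    rw [show ((a:ℝ) + b) = (((a+b : ℕ)):ℝ) by push_cast; ring, Real.exp_nat_mul,
      Real.exp_log (by positivity)]
  have e2 : Real.exp ((a:ℝ) * Real.log (a:ℝ)) = (a:ℝ) ^ a := by
    rw [Real.exp_nat_mul, Real.exp_log ha']
  have e3 : Real.exp ((b:ℝ) * Real.log (b:ℝ)) = (b:ℝ) ^ b := by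
    rw [Real.exp_nat_mul, Real.exp_log hb']
  rw [e1, e2, e3]
  unfold V
  rw [div_div]

lemma entropy_superadd {a b c d : ℕ} (ha : 1 ≤ a) (hb : 1 ≤ b) (hc : 1 ≤ c) (hd : 1 ≤ d) :
    ((a : ℝ) + b) * Real.binEntropy ((a : ℝ) / ((a : ℝ) + b))
      + ((c : ℝ) + d) * Real.binEntropy ((c : ℝ) / ((c : ℝ) + d))
      ≤ (((a : ℝ) + c) + ((b : ℝ) + d)) *
        Real.binEntropy (((a : ℝ) + c) / (((a : ℝ) + c) + ((b : ℝ) + d))) := by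
  have ha' : (0:ℝ) < a := by exact_mod_cast ha
  have hb' : (0:ℝ) < b := by exact_mod_cast hb
  have hc' : (0:ℝ) < c := by exact_mod_cast hc
  have hd' : (0:ℝ) < d := by exact_mod_cast hd
  set s : ℝ := (a : ℝ) + b with hs
  set s' : ℝ := (c : ℝ) + d with hs'
  have hspos : 0 < s := by positivity
  have hs'pos : 0 < s' := by positivity
  have hS : 0 < s + s' := by positivity
  have hconc := Real.strictConcave_binEntropy.concaveOn
  have hx : (a : ℝ) / s ∈ Set.Icc (0:ℝ) 1 := by
    constructor
    · positivity
    · rw [div_le_one hspos]; simp [hs]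
  have hy : (c : ℝ) / s' ∈ Set.Icc (0:ℝ) 1 := by
    constructor
    · positivity
    · rw [div_le_one hs'pos]; simp [hs']
  have hw1 : (0:ℝ) ≤ s / (s + s') := by positivity
  have hw2 : (0:ℝ) ≤ s' / (s + s') := by positivity
  have hwsum : s / (s + s') + s' / (s + s') = 1 := by field_simp
  have := hconc.2 hx hy hw1 hw2 hwsum
  have hcomb : (s / (s + s')) • ((a : ℝ) / s) + (s' / (s + s')) • ((c : ℝ) / s') =
      ((a : ℝ) + c) / (s + s') := by
    simp only [smul_eq_mul]
    field_simp
  rw [hcomb] at this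
  simp only [smul_eq_mul] at this
  set X := Real.binEntropy ((a : ℝ) / s) with hX
  set Y := Real.binEntropy ((c : ℝ) / s') with hY
  have h2 : (s + s') * (s / (s + s') * X + s' / (s + s') * Y)
      ≤ (s + s') * Real.binEntropy (((a : ℝ) + c) / (s + s')) :=
    mul_le_mul_of_nonneg_left this hS.le
  have heq : (s + s') * (s / (s + s') * X + s' / (s + s') * Y) = s * X + s' * Y := by
    field_simp
  rw [heq] at h2
  have hSS : s + s' = ((a : ℝ) + c) + ((b : ℝ) + d) := by rw [hs, hs']; ring
  rw [hSS] at h2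
  exact h2

lemma V_superadd {a b c d : ℕ} (ha : 1 ≤ a) (hb : 1 ≤ b) (hc : 1 ≤ c) (hd : 1 ≤ d) :
    V a b * V c d ≤ V (a + c) (b + d) := by
  rw [V_eq ha hb, V_eq hc hd, V_eq (le_trans ha (Nat.le_add_right a c)) (le_trans hb (Nat.le_add_right b d)), ← Real.exp_add]
  apply Real.exp_le_exp.2
  have := entropy_superadd ha hb hc hd
  push_cast
  push_cast at this
  convert this using 2 <;> ring

lemma g_ratio {a b : ℕ} (ha : 1 ≤ a) (hb : 1 ≤ b) :
    g (a + b) = Real.sqrt (((a : ℝ) + b) / (2 * a * b)) * V a b * (g a * g b) := by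
  have ha' : (0:ℝ) < a := by exact_mod_cast ha
  have hb' : (0:ℝ) < b := by exact_mod_cast hb
  have hs : (0:ℝ) < (a : ℝ) + b := by linarith
  have he : (0:ℝ) < Real.exp 1 := Real.exp_pos 1
  unfold g V
  have hsqrt : Real.sqrt (2 * ((a:ℕ)+(b:ℕ)) : ℝ) =
      Real.sqrt (((a : ℝ) + b) / (2 * a * b)) * (Real.sqrt (2*a) * Real.sqrt (2*b)) := by
    rw [← Real.sqrt_mul (by positivity), ← Real.sqrt_mul (by positivity)]
    congr 1
    push_cast
    field_simp
  push_cast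
  rw [hsqrt]
  have hpow : (((a : ℝ) + b) / Real.exp 1) ^ (a + b) =
      (((a : ℝ) + b) ^ (a + b) / ((a:ℝ) ^ a * (b:ℝ) ^ b)) *
        (((a:ℝ) / Real.exp 1) ^ a * ((b:ℝ) / Real.exp 1) ^ b) := by
    rw [div_pow, div_pow, div_pow, pow_add]
    field_simp
    rw [pow_add]
  rw [hpow]
  ring

lemma choose_upper {a b : ℕ} (ha : 1 ≤ a) (hb : 1 ≤ b) :
    (((a + b).choose a : ℕ) : ℝ) ≤
      S1 / π * (Real.sqrt (((a : ℝ) + b) / (2 * a * b)) * V a b) := by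
  have hga := g_pos ha
  have hgb := g_pos hb
  have hpi : (0:ℝ) < π := Real.pi_pos
  have h1 : (((a+b).choose a : ℕ) : ℝ) = ((a+b).factorial : ℝ) / ((a.factorial : ℝ) * (b.factorial : ℝ)) :=
    Nat.cast_add_choose (K := ℝ)
  rw [h1]
  have hup : ((a+b).factorial : ℝ) ≤ S1 * g (a+b) := fact_upper (by omega)
  have hla : Real.sqrt π * g a ≤ (a.factorial : ℝ) := fact_lower ha
  have hlb : Real.sqrt π * g b ≤ (b.factorial : ℝ) := fact_lower hb
  have hfa : (0:ℝ) < (a.factorial : ℝ) := by exact_mod_cast a.factorial_pos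
  have hfb : (0:ℝ) < (b.factorial : ℝ) := by exact_mod_cast b.factorial_pos
  have hprod : Real.sqrt π * g a * (Real.sqrt π * g b) ≤ (a.factorial : ℝ) * (b.factorial : ℝ) :=
    mul_le_mul hla hlb (by positivity) hfa.le
  have hden : (0:ℝ) < Real.sqrt π * g a * (Real.sqrt π * g b) := by positivity
  calc ((a+b).factorial : ℝ) / ((a.factorial : ℝ) * (b.factorial : ℝ))
      ≤ (S1 * g (a+b)) / (Real.sqrt π * g a * (Real.sqrt π * g b)) :=
        div_le_div₀ (mul_pos S1_pos (g_pos (show 1 ≤ a + b by omega))).le hup hden hprod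
    _ = S1 / π * (Real.sqrt (((a : ℝ) + b) / (2 * a * b)) * V a b) := by
        rw [g_ratio ha hb]
        rw [show Real.sqrt π * g a * (Real.sqrt π * g b) = (Real.sqrt π * Real.sqrt π) * (g a * g b) by ring]
        rw [Real.mul_self_sqrt hpi.le]
        field_simp [hga.ne', hgb.ne']

lemma choose_lower {a b : ℕ} (ha : 1 ≤ a) (hb : 1 ≤ b) :
    Real.sqrt π / S1 ^ 2 * (Real.sqrt (((a : ℝ) + b) / (2 * a * b)) * V a b) ≤
      (((a + b).choose a : ℕ) : ℝ) := by
  have hga := g_pos ha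
  have hgb := g_pos hb
  have hpi : (0:ℝ) < π := Real.pi_pos
  have h1 : (((a+b).choose a : ℕ) : ℝ) = ((a+b).factorial : ℝ) / ((a.factorial : ℝ) * (b.factorial : ℝ)) :=
    Nat.cast_add_choose (K := ℝ)
  rw [h1]
  have hlo : Real.sqrt π * g (a+b) ≤ ((a+b).factorial : ℝ) := fact_lower (by omega)
  have hua : (a.factorial : ℝ) ≤ S1 * g a := fact_upper ha
  have hub : (b.factorial : ℝ) ≤ S1 * g b := fact_upper hb
  have hfa : (0:ℝ) < (a.factorial : ℝ) := by exact_mod_cast a.factorial_pos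
  have hfb : (0:ℝ) < (b.factorial : ℝ) := by exact_mod_cast b.factorial_pos
  have hprod : (a.factorial : ℝ) * (b.factorial : ℝ) ≤ S1 * g a * (S1 * g b) :=
    mul_le_mul hua hub hfb.le (mul_pos S1_pos hga).le
  calc Real.sqrt π / S1 ^ 2 * (Real.sqrt (((a : ℝ) + b) / (2 * a * b)) * V a b)
      = (Real.sqrt π * g (a+b)) / (S1 * g a * (S1 * g b)) := by
        rw [g_ratio ha hb]
        have : S1 * g a * (S1 * g b) = S1 ^ 2 * (g a * g b) := by ring
        rw [this]
        field_simp [hga.ne', hgb.ne', S1_pos.ne']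
    _ ≤ ((a+b).factorial : ℝ) / ((a.factorial : ℝ) * (b.factorial : ℝ)) :=
        div_le_div₀ (Nat.cast_nonneg _) hlo (mul_pos hfa hfb) hprod

set_option maxHeartbeats 2000000 in
theorem binomial_ratio_bound :
    ∃ c₂ : ℝ, 0 < c₂ ∧ ∀ t n k j : ℕ, 2 ≤ t → 1 ≤ n → n ≤ t - 1 → j ≤ k →
      (t : ℝ) / 4 ≤ (k : ℝ) → (k : ℝ) ≤ 3 * t / 4 →
      (n : ℝ) / 4 ≤ (j : ℝ) → (j : ℝ) ≤ 3 * n / 4 →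
      ((t : ℝ) - n) / 4 ≤ (k : ℝ) - j → (k : ℝ) - j ≤ 3 * ((t : ℝ) - n) / 4 →
      ((n.choose j : ℝ) * ((t - n).choose (k - j) : ℝ)) / (t.choose k : ℝ)
        ≤ c₂ / Real.sqrt (min n (t - n) : ℕ) := by
  have hpi : (0:ℝ) < π := Real.pi_pos
  have hS1 : (0:ℝ) < S1 := S1_pos
  have hc2 : (0:ℝ) < 8 * S1 ^ 4 / (π ^ 2 * Real.sqrt π) := by
    apply _root_.div_pos (by positivity) (by positivity)
  refine ⟨8 * S1 ^ 4 / (π ^ 2 * Real.sqrt π), hc2, ?_⟩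
  intro t n k j ht hn1 hnt hjk h1 h2 h3 h4 h5 h6
  set m := t - n with hm
  set i := k - j with hi
  have hnlt : n < t := by omega
  have hm1 : 1 ≤ m := by omega
  have hmr : ((m : ℕ) : ℝ) = (t : ℝ) - n := by
    rw [hm, Nat.cast_sub hnlt.le]
  have hir : ((i : ℕ) : ℝ) = (k : ℝ) - j := by
    rw [hi, Nat.cast_sub hjk]
  rw [← hmr] at h5 h6
  have hnr : (1:ℝ) ≤ (n:ℝ) := by exact_mod_cast hn1
  have hmr1 : (1:ℝ) ≤ (m:ℝ) := by exact_mod_cast hm1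
  have hj1 : 1 ≤ j := by
    have : (0:ℝ) < (j:ℝ) := lt_of_lt_of_le (by linarith only [hnr]) h3
    exact_mod_cast Nat.one_le_iff_ne_zero.mpr (by exact_mod_cast this.ne')
  have hjn : j < n := by
    have : (j:ℝ) < (n:ℝ) := lt_of_le_of_lt h4 (by linarith only [hnr])
    exact_mod_cast this
  have hi1 : 1 ≤ i := by
    have : (0:ℝ) < (i:ℝ) := by rw [hir]; linarith only [h5, hmr1]
    exact_mod_cast Nat.one_le_iff_ne_zero.mpr (by exact_mod_cast this.ne')
  have him : i < m := by
    have : (i:ℝ) < (m:ℝ) := by rw [hir]; linarith only [h6, hmr1]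
    exact_mod_cast this
  have hkt : k < t := by omega
  set b := n - j with hb
  set d := m - i with hd
  have hb1 : 1 ≤ b := by omega
  have hd1 : 1 ≤ d := by omega
  have hbr : ((b : ℕ) : ℝ) = (n : ℝ) - j := by rw [hb, Nat.cast_sub hjn.le]
  have hdr : ((d : ℕ) : ℝ) = (m : ℝ) - i := by rw [hd, Nat.cast_sub him.le]
  -- rewrite chooses
  have e1 : n.choose j = (j + b).choose j := by congr 1; omega
  have e2 : m.choose i = (i + d).choose i := by congr 1; omega
  have e3 : t.choose k = ((j + i) + (b + d)).choose (j + i) := by congr 1 <;> omega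
  rw [e1, e2, e3]
  have B1 := choose_upper hj1 hb1
  have B2 := choose_upper hi1 hd1
  have B3 := choose_lower (a := j + i) (b := b + d) (by omega) (by omega)
  push_cast at B3
  have hVs := V_superadd hj1 hb1 hi1 hd1
  -- real variables
  set ja := (j:ℝ) with hja
  set ba := (b:ℝ) with hba
  set ia := (i:ℝ) with hia
  set da := (d:ℝ) with hda
  have hjap : (0:ℝ) < ja := by rw [hja]; exact Nat.cast_pos.mpr (by omega)
  have hbap : (0:ℝ) < ba := by rw [hba]; exact Nat.cast_pos.mpr (by omega)
  have hiap : (0:ℝ) < ia := by rw [hia]; exact Nat.cast_pos.mpr (by omega)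
  have hdap : (0:ℝ) < da := by rw [hda]; exact Nat.cast_pos.mpr (by omega)
  set x := (ja + ba) / (2 * ja * ba) with hx
  set y := (ia + da) / (2 * ia * da) with hy
  set z := (ja + ia + (ba + da)) / (2 * (ja + ia) * (ba + da)) with hz
  have hxp : 0 < x := by rw [hx]; positivity
  have hyp : 0 < y := by rw [hy]; positivity
  have hzp : 0 < z := by rw [hz]; positivity
  have hV1 : 0 < V j b := V_pos hj1 hb1
  have hV2 : 0 < V i d := V_pos hi1 hd1
  have hV3 : 0 < V (j + i) (b + d) := V_pos (by omega) (by omega)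
  set UB := S1 / π * (Real.sqrt x * V j b) * (S1 / π * (Real.sqrt y * V i d)) with hUB
  set LB := Real.sqrt π / S1 ^ 2 * (Real.sqrt z * V (j + i) (b + d)) with hLB
  have hLBpos : 0 < LB := by
    rw [hLB]
    have := Real.sqrt_pos.mpr hzp
    have := Real.sqrt_pos.mpr hpi
    positivity
  have hUBnn : 0 ≤ UB := by
    rw [hUB]
    have := Real.sqrt_nonneg x
    have := Real.sqrt_nonneg y
    positivity
  have hnum : ((j + b).choose j : ℝ) * ((i + d).choose i : ℝ) ≤ UB := by
    rw [hUB]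
    exact mul_le_mul B1 B2 (Nat.cast_nonneg _) (le_trans (Nat.cast_nonneg _) B1)
  have hstep1 : ((j + b).choose j : ℝ) * ((i + d).choose i : ℝ) /
      (((j + i) + (b + d)).choose (j + i) : ℝ) ≤ UB / LB :=
    div_le_div₀ hUBnn hnum hLBpos B3
  -- Step 2 : UB / LB ≤ K * (√x * √y / √z)
  set K := S1 ^ 4 / (π ^ 2 * Real.sqrt π) with hK
  have hKpos : 0 < K := by
    rw [hK]
    have := Real.sqrt_pos.mpr hpi
    positivity
  have hsp : 0 < Real.sqrt π := Real.sqrt_pos.mpr hpi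
  have hsx : 0 < Real.sqrt x := Real.sqrt_pos.mpr hxp
  have hsy : 0 < Real.sqrt y := Real.sqrt_pos.mpr hyp
  have hsz : 0 < Real.sqrt z := Real.sqrt_pos.mpr hzp
  have hstep2 : UB / LB ≤ K * (Real.sqrt x * Real.sqrt y / Real.sqrt z) := by
    have heq : UB / LB = K * (Real.sqrt x * Real.sqrt y / Real.sqrt z) *
        ((V j b * V i d) / V (j + i) (b + d)) := by
      rw [hUB, hLB, hK]
      field_simp
    rw [heq]
    have hle1 : (V j b * V i d) / V (j + i) (b + d) ≤ 1 :=
      (div_le_one hV3).mpr hVs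
    have hnn : 0 ≤ K * (Real.sqrt x * Real.sqrt y / Real.sqrt z) := by positivity
    have := mul_le_mul_of_nonneg_left hle1 hnn
    simpa using this
  -- Step 3 : combine square roots
  have hsqrt_comb : Real.sqrt x * Real.sqrt y / Real.sqrt z = Real.sqrt (x * y / z) := by
    rw [← Real.sqrt_mul hxp.le, ← Real.sqrt_div (by positivity)]
  -- the minimum
  set μ := ((min n m : ℕ) : ℝ) with hμ
  have hμpos : (0:ℝ) < μ := by
    rw [hμ]
    exact_mod_cast Nat.lt_of_lt_of_le Nat.zero_lt_one (by omega)
  have hμn : μ ≤ (n:ℝ) := by rw [hμ]; exact_mod_cast Nat.min_le_left n m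
  have hμm : μ ≤ (m:ℝ) := by rw [hμ]; exact_mod_cast Nat.min_le_right n m
  have hNr : (n:ℝ) = ja + ba := by rw [hbr]; ring
  have hMr : (m:ℝ) = ia + da := by rw [hdr]; ring
  have hTr : (t:ℝ) = (ja + ia) + (ba + da) := by
    have : (t:ℝ) = (n:ℝ) + m := by rw [hmr]; ring
    rw [this, hNr, hMr]; ring
  -- bounds on products
  have hjb : ((n:ℝ))^2 / 16 ≤ ja * ba := by
    have h3' : (n:ℝ) / 4 ≤ ja := h3
    have h4' : (n:ℝ) / 4 ≤ ba := by rw [hbr]; linarith only [h4]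
    have hmm := mul_le_mul h3' h4' (by linarith only [hnr]) (by linarith only [h3', hnr])
    calc ((n:ℝ))^2 / 16 = (n:ℝ) / 4 * ((n:ℝ) / 4) := by ring
      _ ≤ ja * ba := hmm
  have hid : ((m:ℝ))^2 / 16 ≤ ia * da := by
    have h5' : (m:ℝ) / 4 ≤ ia := by rw [hir]; linarith only [h5]
    have h6' : (m:ℝ) / 4 ≤ da := by rw [hdr, hir]; linarith only [h6]
    have hmm := mul_le_mul h5' h6' (by linarith only [hmr1]) (by linarith only [h5', hmr1])
    calc ((m:ℝ))^2 / 16 = (m:ℝ) / 4 * ((m:ℝ) / 4) := by ring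
      _ ≤ ia * da := hmm
  have hkk : (ja + ia) * (ba + da) ≤ ((t:ℝ))^2 / 4 := by
    rw [hTr]
    nlinarith only [sq_nonneg ((ja + ia) - (ba + da))]
  have hminT : μ * (t:ℝ) ≤ 2 * (n:ℝ) * (m:ℝ) := by
    have htnm : (t:ℝ) = (n:ℝ) + m := by rw [hmr]; ring
    rcases le_total (n:ℝ) (m:ℝ) with hle | hle
    · nlinarith only [hμn, hle, htnm, hμpos, hnr, hmr1]
    · nlinarith only [hμm, hle, htnm, hμpos, hnr, hmr1]
  have htr1 : (1:ℝ) ≤ (t:ℝ) := by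
    have : (2:ℝ) ≤ (t:ℝ) := by exact_mod_cast ht
    linarith only [this]
  have hXle : x * y / z ≤ 64 / μ := by
    have hfrac : x * y / z = ((n:ℝ) * m * ((ja + ia) * (ba + da))) /
        (2 * (ja * ba) * (ia * da) * (t:ℝ)) := by
      rw [hx, hy, hz, hNr, hMr, hTr]
      field_simp
    rw [hfrac, div_le_div_iff₀ (by positivity) hμpos]
    have hnp : (0:ℝ) < (n:ℝ) := by linarith only [hnr]
    have hmp : (0:ℝ) < (m:ℝ) := by linarith only [hmr1]
    have htp : (0:ℝ) < (t:ℝ) := by linarith only [htr1]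
    -- N*M*P*μ ≤ 128 * (ja*ba)*(ia*da)*T
    have c1 : (n:ℝ) * m * ((ja + ia) * (ba + da)) * μ ≤
        (n:ℝ) * m * (((t:ℝ))^2 / 4) * μ :=
      mul_le_mul_of_nonneg_right
        (mul_le_mul_of_nonneg_left hkk (mul_nonneg hnp.le hmp.le)) hμpos.le
    have c2 : (n:ℝ) * m * (((t:ℝ))^2 / 4) * μ ≤ ((n:ℝ))^2 * ((m:ℝ))^2 * (t:ℝ) / 2 := by
      calc (n:ℝ) * m * (((t:ℝ))^2 / 4) * μ
          = ((n:ℝ) * m * t / 4) * (μ * t) := by ring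
        _ ≤ ((n:ℝ) * m * t / 4) * (2 * (n:ℝ) * (m:ℝ)) :=
            mul_le_mul_of_nonneg_left hminT (by positivity)
        _ = ((n:ℝ))^2 * ((m:ℝ))^2 * (t:ℝ) / 2 := by ring
    have c3 : ((n:ℝ))^2 * ((m:ℝ))^2 * (t:ℝ) / 2 ≤ 64 * (2 * (ja * ba) * (ia * da) * (t:ℝ)) := by
      have hp1 : ((n:ℝ))^2 / 16 * (((m:ℝ))^2 / 16) ≤ (ja * ba) * (ia * da) :=
        mul_le_mul hjb hid (by positivity) (by positivity)
      calc ((n:ℝ))^2 * ((m:ℝ))^2 * (t:ℝ) / 2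
          = (((n:ℝ))^2 / 16 * (((m:ℝ))^2 / 16)) * (128 * (t:ℝ)) := by ring
        _ ≤ ((ja * ba) * (ia * da)) * (128 * (t:ℝ)) :=
            mul_le_mul_of_nonneg_right hp1 (by positivity)
        _ = 64 * (2 * (ja * ba) * (ia * da) * (t:ℝ)) := by ring
    linarith only [c1, c2, c3]
  -- finish
  have hsqrtX : Real.sqrt (x * y / z) ≤ 8 / Real.sqrt μ := by
    have h64 : Real.sqrt (64 / μ) = 8 / Real.sqrt μ := by
      rw [Real.sqrt_div (by norm_num : (0:ℝ) ≤ 64)]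
      congr 1
      rw [show (64:ℝ) = 8 ^ 2 by norm_num, Real.sqrt_sq (by norm_num : (0:ℝ) ≤ 8)]
    rw [← h64]
    exact Real.sqrt_le_sqrt hXle
  have hfinal : K * (Real.sqrt x * Real.sqrt y / Real.sqrt z) ≤
      8 * S1 ^ 4 / (π ^ 2 * Real.sqrt π) / Real.sqrt μ := by
    rw [hsqrt_comb]
    have := mul_le_mul_of_nonneg_left hsqrtX hKpos.le
    calc K * Real.sqrt (x * y / z) ≤ K * (8 / Real.sqrt μ) := this
      _ = 8 * S1 ^ 4 / (π ^ 2 * Real.sqrt π) / Real.sqrt μ := by rw [hK]; ring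
  calc ((j + b).choose j : ℝ) * ((i + d).choose i : ℝ) /
      (((j + i) + (b + d)).choose (j + i) : ℝ) ≤ UB / LB := hstep1
    _ ≤ K * (Real.sqrt x * Real.sqrt y / Real.sqrt z) := hstep2
    _ ≤ 8 * S1 ^ 4 / (π ^ 2 * Real.sqrt π) / Real.sqrt μ := hfinal
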